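/- Let (d, r) be an arithmetical structure on the wheel graph W_n such that r_0 divides r_1 + r_n, r_n divides r_0, and r_1 divides r_0. Define d̃ and r̃ on W_{n+1} by: d̃_{n+1} = 1, d̃_i = d_i for i ∉ {0, 1, n, n+1}, d̃_0 = d_0 + (r_1 + r_n + r_0)/r_0, d̃_1 = d_1 + (r_1 + r_0)/r_1, d̃_n = d_n + (r_n + r_0)/r_n, and r̃_{n+1} = r_1 + r_n + r_0, r̃_i = r_i otherwise. Then (d̃, r̃) is an arithmetical structure on W_{n+1}, where the new cycle vertex v_{n+1} is inserted between v_n and v_1. -/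
import Mathlib


/-- Predecessor of cycle vertex `i` in the cycle `v_1, …, v_n`. -/
def cyclePrev (n i : ℕ) : ℕ := if i = 1 then n else i - 1

/-- Successor of cycle vertex `i` in the cycle `v_1, …, v_n`. -/
def cycleNext (n i : ℕ) : ℕ := if i = n then 1 else i + 1

/-- `(d, r)` is an arithmetical structure on the wheel graph `W_n`, whose hub `v_0`
is indexed by `0` and whose cycle vertices `v_1, …, v_n` are indexed by `1, …, n`. -/
def IsWheelArithStructure (n : ℕ) (d r : ℕ → ℕ) : Prop :=
  (∀ i ≤ n, 0 < d i) ∧ (∀ i ≤ n, 0 < r i) ∧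
  (Finset.range (n + 1)).gcd r = 1 ∧
  d 0 * r 0 = ∑ i ∈ Finset.Icc 1 n, r i ∧
  ∀ i, 1 ≤ i → i ≤ n → d i * r i = r 0 + r (cyclePrev n i) + r (cycleNext n i)

/-- From an arithmetical structure on `W_n` with `r 0 ∣ r 1 + r n`, `r n ∣ r 0`,
`r 1 ∣ r 0`, one obtains an arithmetical structure on `W_{n+1}`, where the new cycle
vertex `v_{n+1}` is inserted between `v_n` and `v_1`. -/
theorem wheel_structure_extend (n : ℕ) (hn : 3 ≤ n) (d r : ℕ → ℕ)
    (h : IsWheelArithStructure n d r)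
    (h1 : r 0 ∣ r 1 + r n) (h2 : r n ∣ r 0) (h3 : r 1 ∣ r 0) :
    IsWheelArithStructure (n + 1)
      (fun i =>
        if i = 0 then d 0 + (r 1 + r n + r 0) / r 0
        else if i = 1 then d 1 + (r 1 + r 0) / r 1
        else if i = n then d n + (r n + r 0) / r n
        else if i = n + 1 then 1
        else d i)
      (fun i => if i = n + 1 then r 1 + r n + r 0 else r i) := by
  obtain ⟨hd, hr, hgcd, hhub, hcyc⟩ := h
  have hr0 := hr 0 (Nat.zero_le n)
  have hr1 := hr 1 (by omega)
  have hrn := hr n le_rfl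
  have hk0 : (r 1 + r n + r 0) / r 0 * r 0 = r 1 + r n + r 0 :=
    Nat.div_mul_cancel (dvd_add h1 dvd_rfl)
  have hk1 : (r 1 + r 0) / r 1 * r 1 = r 1 + r 0 :=
    Nat.div_mul_cancel (dvd_add dvd_rfl h3)
  have hkn : (r n + r 0) / r n * r n = r n + r 0 :=
    Nat.div_mul_cancel (dvd_add dvd_rfl h2)
  refine ⟨?_, ?_, ?_, ?_, ?_⟩
  · intro i hi
    dsimp only
    split_ifs with e0 e1 en e2
    · exact Nat.add_pos_left (hd 0 (Nat.zero_le n)) _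
    · exact Nat.add_pos_left (hd 1 (by omega)) _
    · exact Nat.add_pos_left (hd n le_rfl) _
    · exact Nat.one_pos
    · exact hd i (by omega)
  · intro i hi
    dsimp only
    split_ifs with e
    · omega
    · exact hr i (by omega)
  · have hdvd : (Finset.range (n + 2)).gcd
        (fun i => if i = n + 1 then r 1 + r n + r 0 else r i) ∣
        (Finset.range (n + 1)).gcd r := by
      apply Finset.dvd_gcd
      intro i hi
      have hi' : i ∈ Finset.range (n + 2) := by
        simp only [Finset.mem_range] at hi ⊢; omega
      have := Finset.gcd_dvd (f := fun i => if i = n + 1 then r 1 + r n + r 0 else r i) hi'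
      simpa [show i ≠ n + 1 by simp only [Finset.mem_range] at hi; omega] using this
    rw [hgcd] at hdvd
    exact Nat.dvd_one.mp hdvd
  · dsimp only
    have hsum : ∑ i ∈ Finset.Icc 1 (n + 1), (if i = n + 1 then r 1 + r n + r 0 else r i)
        = (∑ i ∈ Finset.Icc 1 n, r i) + (r 1 + r n + r 0) := by
      rw [Finset.sum_Icc_succ_top (by omega : 1 ≤ n + 1), if_pos rfl]
      congr 1
      apply Finset.sum_congr rfl
      intro i hi
      rw [if_neg]
      simp only [Finset.mem_Icc] at hi; omega
    have he : ((if (0:ℕ) = 0 then d 0 + (r 1 + r n + r 0) / r 0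
          else if (0:ℕ) = 1 then d 1 + (r 1 + r 0) / r 1
          else if (0:ℕ) = n then d n + (r n + r 0) / r n
          else if (0:ℕ) = n + 1 then 1 else d 0) *
        (if (0:ℕ) = n + 1 then r 1 + r n + r 0 else r 0))
        = d 0 * r 0 + (r 1 + r n + r 0) := by
      simp only [if_pos rfl, show ¬((0:ℕ) = n + 1) by omega, if_false, if_true]
      rw [Nat.add_mul, hk0]
    rw [he, hsum, hhub]
  · intro i hi1 hi2
    dsimp only
    rcases eq_or_ne i 1 with e1 | e1
    · subst e1
      have hold := hcyc 1 le_rfl (by omega)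
      have hp : cyclePrev n 1 = n := by rw [cyclePrev, if_pos rfl]
      have hq : cycleNext n 1 = 2 := by rw [cycleNext, if_neg (by omega)]
      rw [hp, hq] at hold
      have hp' : cyclePrev (n + 1) 1 = n + 1 := by rw [cyclePrev, if_pos rfl]
      have hq' : cycleNext (n + 1) 1 = 2 := by rw [cycleNext, if_neg (by omega)]
      rw [hp', hq']
      simp only [show ¬((1:ℕ) = 0) by omega, show ¬((1:ℕ) = n) by omega,
        show ¬((1:ℕ) = n + 1) by omega, show ¬((0:ℕ) = n + 1) by omega,
        show ¬((2:ℕ) = n + 1) by omega, if_false, if_pos rfl, if_true]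
      rw [Nat.add_mul, hk1]
      omega
    · rcases eq_or_ne i n with en | en
      · subst en
        have hold := hcyc i (by omega) le_rfl
        have hp : cyclePrev i i = i - 1 := by rw [cyclePrev, if_neg e1]
        have hq : cycleNext i i = 1 := by rw [cycleNext, if_pos rfl]
        rw [hp, hq] at hold
        have hp' : cyclePrev (i + 1) i = i - 1 := by rw [cyclePrev, if_neg e1]
        have hq' : cycleNext (i + 1) i = i + 1 := by rw [cycleNext, if_neg (by omega)]
        rw [hp', hq']
        simp only [show ¬(i = 0) by omega, if_false, if_neg e1, if_pos rfl,
          show ¬(i = i + 1) by omega, show ¬((0:ℕ) = i + 1) by omega,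
          show ¬(i - 1 = i + 1) by omega, if_true]
        rw [Nat.add_mul, hkn]
        omega
      · rcases eq_or_ne i (n + 1) with en1 | en1
        · subst en1
          have hp' : cyclePrev (n + 1) (n + 1) = n := by
            rw [cyclePrev, if_neg (by omega)]; omega
          have hq' : cycleNext (n + 1) (n + 1) = 1 := by rw [cycleNext, if_pos rfl]
          rw [hp', hq']
          simp only [show ¬(n + 1 = 0) by omega, show ¬(n + 1 = 1) by omega,
            show ¬(n + 1 = n) by omega, show ¬((0:ℕ) = n + 1) by omega,
            show ¬(n = n + 1) by omega, show ¬((1:ℕ) = n + 1) by omega,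
            if_false, if_pos rfl, if_true]
          omega
        · have hold := hcyc i hi1 (by omega)
          have hp : cyclePrev n i = i - 1 := by rw [cyclePrev, if_neg e1]
          have hq : cycleNext n i = i + 1 := by rw [cycleNext, if_neg en]
          rw [hp, hq] at hold
          have hp' : cyclePrev (n + 1) i = i - 1 := by rw [cyclePrev, if_neg e1]
          have hq' : cycleNext (n + 1) i = i + 1 := by rw [cycleNext, if_neg en1]
          rw [hp', hq']
          simp only [show ¬(i = 0) by omega, if_neg e1, if_neg en, if_neg en1,
            show ¬((0:ℕ) = n + 1) by omega, show ¬(i - 1 = n + 1) by omega,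
            show ¬(i + 1 = n + 1) by omega, if_false, if_true]
          exact hold
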